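/- For all natural numbers n, positive integer β, and positive integers α₁, α₂ (Gould–Vandermonde convolution): (α₁+α₂)/(βn+α₁+α₂) * C(βn+α₁+α₂, n) = ∑_{i=0}^n [α₁/(βi+α₁) * C(βi+α₁, i)] * [α₂/(β(n-i)+α₂) * C(β(n-i)+α₂, n-i)]. -/

import Mathlib

open Finset

noncomputable def fc (β n α : ℕ) : ℚ :=
  (α : ℚ) / (β * n + α) * ((β * n + α).choose n)

lemma fc_zero (β α : ℕ) (h : 0 < α) : fc β 0 α = 1 := by
  have hα : (α : ℚ) ≠ 0 := by exact_mod_cast h.ne'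
  simp [fc, div_self hα]

lemma fc_alpha_zero (β n : ℕ) : fc β n 0 = 0 := by simp [fc]

/-- normal form: f β (k+1) a = a/(k+1) * C(M, k) when β*(k+1)+a = M+1 -/
lemma fc_norm (β k a M : ℕ) (hM : β * (k + 1) + a = M + 1) :
    fc β (k + 1) a = (a : ℚ) / (k + 1) * (M.choose k) := by
  have keyQ : ((M + 1).choose (k + 1) : ℚ) * (k + 1) = (M + 1) * M.choose k := by
    exact_mod_cast (Nat.add_one_mul_choose_eq M k).symm
  have hdQ : (β : ℚ) * ((k : ℚ) + 1) + a = (M : ℚ) + 1 := by exact_mod_cast hM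
  rw [fc, hM]
  push_cast
  rw [hdQ]
  have h1 : ((M : ℚ) + 1) ≠ 0 := by positivity
  have h2 : ((k : ℚ) + 1) ≠ 0 := by positivity
  field_simp
  linear_combination (a : ℚ) * keyQ

/-- the forest recurrence -/
lemma fc_rec (β n α : ℕ) (hβ : 0 < β) :
    fc β (n + 1) (α + 1) = fc β (n + 1) α + fc β n (α + β) := by
  obtain ⟨b, rfl⟩ : ∃ b, β = b + 1 := ⟨β - 1, by omega⟩
  cases n with
  | zero =>
    have h1 : fc (b+1) 1 (α+1) = (α : ℚ) + 1 := by
      rw [fc_norm (b+1) 0 (α+1) (b + α + 1) (by ring)]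
      simp
    have h2 : fc (b+1) 1 α = (α : ℚ) := by
      rw [fc_norm (b+1) 0 α (b + α) (by ring)]
      simp
    rw [h1, h2, fc_zero _ _ (by omega)]
  | succ m =>
    set M := b * (m + 2) + m + α + 1 with hMdef
    rw [fc_norm (b+1) (m+1) (α+1) (M+1) (by rw [hMdef]; ring),
        fc_norm (b+1) (m+1) α M (by rw [hMdef]; ring),
        fc_norm (b+1) m (α + (b+1)) M (by rw [hMdef]; ring)]
    have pascal : ((M+1).choose (m+1) : ℚ) = M.choose m + M.choose (m+1) := by
      exact_mod_cast Nat.choose_succ_succ M m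
    have hsub : M - m = b * (m + 2) + α + 1 := by omega
    have key : (M.choose (m+1) : ℚ) * (m + 1) = M.choose m * (b * (m+2) + α + 1) := by
      have h := Nat.choose_succ_right_eq M m
      rw [hsub] at h
      exact_mod_cast h
    have h1 : ((m : ℚ) + 1) ≠ 0 := by positivity
    have h2 : ((m : ℚ) + 1 + 1) ≠ 0 := by positivity
    push_cast
    field_simp
    linear_combination (((α:ℚ)+1) * ((m:ℚ)+1)) * pascal + key

lemma fc_conv (β : ℕ) (hβ : 0 < β) :
    ∀ n α₁ α₂ : ℕ, 0 < α₁ → 0 < α₂ →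
      ∑ i ∈ range (n + 1), fc β i α₁ * fc β (n - i) α₂ = fc β n (α₁ + α₂) := by
  intro n
  induction n using Nat.strong_induction_on with
  | _ n IH =>
    intro α₁ α₂ h₁ h₂
    induction α₂, h₂ using Nat.le_induction with
    | base =>
      cases n with
      | zero =>
        simp [fc_zero _ _ h₁, fc_zero _ _ (by norm_num : (0:ℕ) < 1),
          fc_zero _ _ (by omega : 0 < α₁ + 1)]
      | succ m =>
        rw [Finset.sum_range_succ]
        have step : ∀ i ∈ range (m + 1), fc β i α₁ * fc β (m + 1 - i) 1
            = fc β i α₁ * fc β (m - i) β := by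
          intro i hi
          simp only [Finset.mem_range] at hi
          have h : m + 1 - i = (m - i) + 1 := by omega
          have hr := fc_rec β (m - i) 0 hβ
          simp only [fc_alpha_zero, zero_add] at hr
          rw [h, hr]
        rw [Finset.sum_congr rfl step, IH m (by omega) α₁ β h₁ hβ,
            Nat.sub_self, fc_zero _ _ (by norm_num), mul_one,
            fc_rec β m α₁ hβ]
        ring
    | succ α₂ hα₂ ih =>
      cases n with
      | zero =>
        simp [fc_zero _ _ h₁, fc_zero _ _ (by omega : 0 < α₂ + 1),
          fc_zero _ _ (by omega : 0 < α₁ + (α₂ + 1))]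
      | succ m =>
        rw [Finset.sum_range_succ] at ih ⊢
        have step : ∀ i ∈ range (m + 1), fc β i α₁ * fc β (m + 1 - i) (α₂ + 1)
            = fc β i α₁ * fc β (m + 1 - i) α₂ + fc β i α₁ * fc β (m - i) (α₂ + β) := by
          intro i hi
          simp only [Finset.mem_range] at hi
          have h : m + 1 - i = (m - i) + 1 := by omega
          rw [h, fc_rec β (m - i) α₂ hβ, mul_add]
        rw [Finset.sum_congr rfl step, Finset.sum_add_distrib,
            IH m (by omega) α₁ (α₂ + β) h₁ (by omega)]
        rw [Nat.sub_self] at ih ⊢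
        rw [fc_zero _ _ hα₂, mul_one] at ih
        rw [fc_zero _ _ (by omega : 0 < α₂ + 1), mul_one]
        have hr := fc_rec β m (α₁ + α₂) hβ
        have e1 : α₁ + (α₂ + 1) = α₁ + α₂ + 1 := by ring
        have e2 : α₁ + (α₂ + β) = α₁ + α₂ + β := by ring
        rw [e1, e2, hr]
        linarith [ih]

theorem stmt_5 (n β α₁ α₂ : ℕ) (hβ : 0 < β) (h₁ : 0 < α₁) (h₂ : 0 < α₂) :
    ((α₁ + α₂ : ℚ) / (β * n + α₁ + α₂)) * ((β * n + α₁ + α₂).choose n)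
      = ∑ i ∈ Finset.range (n + 1),
          ((α₁ : ℚ) / (β * i + α₁)) * ((β * i + α₁).choose i) *
            (((α₂ : ℚ) / (β * (n - i) + α₂)) * ((β * (n - i) + α₂).choose (n - i))) := by
  have h := fc_conv β hβ n α₁ α₂ h₁ h₂
  have hl : ((α₁ + α₂ : ℚ) / (β * n + α₁ + α₂)) * ((β * n + α₁ + α₂).choose n)
      = fc β n (α₁ + α₂) := by
    rw [show β * n + α₁ + α₂ = β * n + (α₁ + α₂) from by ring, fc]
    push_cast
    ring
  rw [hl, ← h]
  refine Finset.sum_congr rfl fun i hi => ?_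
  simp only [Finset.mem_range] at hi
  have hin : i ≤ n := by omega
  rw [fc, fc]
  push_cast [Nat.cast_sub hin]
  ring
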